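/- (Naimark complement preserves frame structure) If Φ = {φ_j}_{j=1}^n is a unit-norm tight frame for F^m with m < n, then there exists a unit-norm tight frame Ψ = {ψ_j}_{j=1}^n for F^{n−m} such that for all j ≠ l, |⟨ψ_j, ψ_l⟩| = (m/(n−m))·|⟨φ_j, φ_l⟩|; consequently μ(Ψ) = (m/(n−m))·μ(Φ). -/

import Mathlib

open scoped InnerProductSpace

/-- The coherence of a family of vectors: the supremum of absolute pairwise inner products. -/
noncomputable def coherence (𝕜 : Type*) {E : Type*} [RCLike 𝕜] [NormedAddCommGroup E]
    [InnerProductSpace 𝕜 E] {n : ℕ} (φ : Fin n → E) : ℝ :=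
  sSup {r : ℝ | ∃ j l : Fin n, j ≠ l ∧ r = ‖(⟪φ j, φ l⟫_𝕜 : 𝕜)‖}

open RCLike Finset
open scoped Pointwise

set_option maxHeartbeats 1000000 in
/-- Naimark complement: a unit-norm tight frame of `n` vectors in `𝕜^m` (`m < n`) yields a
unit-norm tight frame of `n` vectors in `𝕜^(n-m)` with all absolute pairwise inner products,
hence the coherence, scaled by `m/(n-m)`. -/
theorem naimark_complement_frame (𝕜 : Type*) [RCLike 𝕜] (m n : ℕ) (hm : 0 < m) (hmn : m < n)
    (φ : Fin n → EuclideanSpace 𝕜 (Fin m)) (hunit : ∀ j, ‖φ j‖ = 1)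
    (htight : ∀ x : EuclideanSpace 𝕜 (Fin m),
      ∑ j, ‖(⟪φ j, x⟫_𝕜 : 𝕜)‖ ^ 2 = ((n : ℝ) / m) * ‖x‖ ^ 2) :
    ∃ ψ : Fin n → EuclideanSpace 𝕜 (Fin (n - m)),
      (∀ j, ‖ψ j‖ = 1) ∧
      (∀ x : EuclideanSpace 𝕜 (Fin (n - m)),
        ∑ j, ‖(⟪ψ j, x⟫_𝕜 : 𝕜)‖ ^ 2 = ((n : ℝ) / (n - m : ℕ)) * ‖x‖ ^ 2) ∧
      (∀ j l : Fin n, j ≠ l →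
        ‖(⟪ψ j, ψ l⟫_𝕜 : 𝕜)‖ = ((m : ℝ) / ((n : ℝ) - m)) * ‖(⟪φ j, φ l⟫_𝕜 : 𝕜)‖) ∧
      coherence 𝕜 ψ = ((m : ℝ) / ((n : ℝ) - m)) * coherence 𝕜 φ := by
  have hm0 : (0 : ℝ) < m := by exact_mod_cast hm
  have hn0 : (0 : ℝ) < n := by exact_mod_cast hm.trans hmn
  have hnm0 : (0 : ℝ) < (n : ℝ) - m := by
    have : (m : ℝ) < n := by exact_mod_cast hmn
    linarith
  have hcast : ((n - m : ℕ) : ℝ) = (n : ℝ) - m := by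
    exact_mod_cast Nat.cast_sub hmn.le
  -- Step 1: Gram identity
  set ν₀ : ℝ := (n : ℝ) / m with hν₀
  set T : EuclideanSpace 𝕜 (Fin m) →ₗ[𝕜] EuclideanSpace 𝕜 (Fin m) :=
    { toFun := fun x => ∑ j, (⟪φ j, x⟫_𝕜 : 𝕜) • φ j
      map_add' := by intro x y; simp [inner_add_right, add_smul, Finset.sum_add_distrib]
      map_smul' := by intro c x; simp [inner_smul_right, smul_smul, Finset.smul_sum]
      } with hTdef
  have hsym : T.IsSymmetric := by
    intro x y
    simp only [hTdef, LinearMap.coe_mk, AddHom.coe_mk, sum_inner, inner_sum,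
      inner_smul_left, inner_smul_right]
    refine Finset.sum_congr rfl fun j _ => ?_
    rw [← inner_conj_symm x (φ j)]
    ring
  have hsub : (T - (ν₀ : 𝕜) • LinearMap.id).IsSymmetric := by
    apply hsym.sub
    intro x y
    simp only [LinearMap.smul_apply, LinearMap.id_apply]
    rw [inner_smul_left, inner_smul_right, conj_ofReal]
  have hzero : T - (ν₀ : 𝕜) • LinearMap.id = 0 := by
    rw [← hsub.inner_map_self_eq_zero]
    intro x
    have h1 : ⟪T x, x⟫_𝕜 = ((∑ j, ‖(⟪φ j, x⟫_𝕜 : 𝕜)‖ ^ 2 : ℝ) : 𝕜) := by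
      simp only [hTdef, LinearMap.coe_mk, AddHom.coe_mk, sum_inner, inner_smul_left]
      push_cast
      refine Finset.sum_congr rfl fun j _ => ?_
      rw [RCLike.conj_mul]
    simp only [LinearMap.sub_apply, LinearMap.smul_apply, LinearMap.id_apply, inner_sub_left,
      inner_smul_left, conj_ofReal, h1, htight x, inner_self_eq_norm_sq_to_K]
    push_cast
    ring
  have hGram : ∀ i i' : Fin m, ∑ j, (starRingEnd 𝕜) (φ j i') * φ j i
      = if i = i' then ((ν₀ : ℝ) : 𝕜) else 0 := by
    intro i i'
    have hT : T (EuclideanSpace.single i' (1 : 𝕜))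
        = (ν₀ : 𝕜) • EuclideanSpace.single i' (1 : 𝕜) := by
      have := congrFun (congrArg DFunLike.coe hzero) (EuclideanSpace.single i' (1 : 𝕜))
      simpa [sub_eq_zero] using this
    have h2 := congrArg (fun v => (⟪EuclideanSpace.single i (1 : 𝕜), v⟫_𝕜 : 𝕜)) hT
    simp only [hTdef, LinearMap.coe_mk, AddHom.coe_mk, inner_sum, inner_smul_right,
      EuclideanSpace.inner_single_left, EuclideanSpace.inner_single_right, map_one, one_mul,
      inner_smul_right] at h2
    rw [h2]
    simp [EuclideanSpace.single_apply, eq_comm]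
  -- Step 2: orthonormal rows
  set c₁ : ℝ := Real.sqrt ((m : ℝ) / n) with hc₁
  have hc₁sq : (c₁ : ℝ) ^ 2 = (m : ℝ) / n :=
    Real.sq_sqrt (by positivity)
  set r : Fin m → EuclideanSpace 𝕜 (Fin n) := fun i => WithLp.toLp 2 (fun j => (c₁ : 𝕜) * φ j i) with hrdef
  have hrON : ∀ i i' : Fin m, (⟪r i, r i'⟫_𝕜 : 𝕜) = if i = i' then 1 else 0 := by
    intro i i'
    have : (⟪r i, r i'⟫_𝕜 : 𝕜) = ((c₁ ^ 2 : ℝ) : 𝕜) * ∑ j, (starRingEnd 𝕜) (φ j i) * φ j i' := by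
      simp only [hrdef, PiLp.inner_apply, RCLike.inner_apply, map_mul, conj_ofReal,
        Finset.mul_sum]
      push_cast
      refine Finset.sum_congr rfl fun j _ => ?_
      ring
    rw [this, hGram i' i]
    by_cases h : i = i'
    · rw [if_pos h.symm, if_pos h, ← RCLike.ofReal_mul]
      rw [hν₀, hc₁sq]
      rw [show (m:ℝ)/n * ((n:ℝ)/m) = 1 by field_simp]
      simp
    · rw [if_neg (fun hh => h hh.symm), if_neg h, mul_zero]
  -- Step 3: extend to an orthonormal basis
  have hcard : Module.finrank 𝕜 (EuclideanSpace 𝕜 (Fin n)) = Fintype.card (Fin m ⊕ Fin (n - m)) := by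
    simp [Nat.add_sub_cancel' hmn.le]
  set v : Fin m ⊕ Fin (n - m) → EuclideanSpace 𝕜 (Fin n) := Sum.elim r 0 with hvdef
  have hvON : Orthonormal 𝕜 ((Set.range Sum.inl).restrict v) := by
    rw [orthonormal_iff_ite]
    rintro ⟨_, i, rfl⟩ ⟨_, i', rfl⟩
    simp only [Set.restrict_apply, hvdef, Sum.elim_inl]
    show ⟪r i, r i'⟫_𝕜 = _
    rw [hrON i i']
    exact if_congr ⟨fun h => by subst h; rfl, fun h => Sum.inl.inj (congrArg Subtype.val h)⟩ rfl rfl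
  obtain ⟨b, hb⟩ := hvON.exists_orthonormalBasis_extension_of_card_eq hcard
  have hbr : ∀ i, b (Sum.inl i) = r i := fun i => hb _ ⟨i, rfl⟩
  set sv : Fin (n - m) → EuclideanSpace 𝕜 (Fin n) := fun k => b (Sum.inr k) with hsvdef
  have hsvON : ∀ k k', (⟪sv k, sv k'⟫_𝕜 : 𝕜) = if k = k' then 1 else 0 := by
    have hbo := b.orthonormal
    rw [orthonormal_iff_ite] at hbo
    intro k k'
    simpa using hbo (Sum.inr k) (Sum.inr k')
  -- row-splitting identity
  set μ : ℝ := (m : ℝ) / n with hμ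
  have hrow : ∀ j l : Fin n, ∑ k, sv k j * (starRingEnd 𝕜) (sv k l)
      = (if j = l then 1 else 0) - ((μ : ℝ) : 𝕜) * (starRingEnd 𝕜) (⟪φ j, φ l⟫_𝕜 : 𝕜) := by
    intro j l
    have key := b.sum_inner_mul_inner (EuclideanSpace.single j (1 : 𝕜))
      (EuclideanSpace.single l (1 : 𝕜))
    simp only [EuclideanSpace.inner_single_left, EuclideanSpace.inner_single_right, map_one,
      one_mul] at key
    rw [Fintype.sum_sum_type] at key
    have hL : ∑ i : Fin m, b (Sum.inl i) j * (starRingEnd 𝕜) (b (Sum.inl i) l)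
        = ((μ : ℝ) : 𝕜) * (starRingEnd 𝕜) (⟪φ j, φ l⟫_𝕜 : 𝕜) := by
      have hφinner : (⟪φ j, φ l⟫_𝕜 : 𝕜) = ∑ i, (starRingEnd 𝕜) (φ j i) * φ l i := by
        simp [PiLp.inner_apply, RCLike.inner_apply]
        exact Finset.sum_congr rfl fun _ _ => mul_comm _ _
      rw [hφinner]
      simp only [map_sum, map_mul, RCLike.conj_conj]
      rw [Finset.mul_sum]
      refine Finset.sum_congr rfl fun i _ => ?_
      rw [hbr i]
      simp only [hrdef, map_mul, conj_ofReal]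
      have : ((μ : ℝ) : 𝕜) = (c₁ : 𝕜) * (c₁ : 𝕜) := by
        rw [← RCLike.ofReal_mul, ← sq, hc₁sq]
      rw [this]
      ring
    have hsingle : (starRingEnd 𝕜) (EuclideanSpace.single j (1 : 𝕜) l)
        = if j = l then 1 else 0 := by
      simp [EuclideanSpace.single_apply, eq_comm]
    rw [hL, hsingle] at key
    simp only [hsvdef]
    linear_combination key
  -- Step 4: define ψ
  set ν : ℝ := (n : ℝ) / ((n : ℝ) - m) with hν
  have hνpos : 0 < ν := by positivity
  have hμpos : 0 < μ := by positivity
  set c₂ : ℝ := Real.sqrt ν with hc₂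
  have hc₂sq : (c₂ : ℝ) ^ 2 = ν := Real.sq_sqrt hνpos.le
  set ψ : Fin n → EuclideanSpace 𝕜 (Fin (n - m)) := fun j => WithLp.toLp 2 (fun k => (c₂ : 𝕜) * sv k j) with hψdef
  have hcol : ∀ k k', ∑ j, sv k j * (starRingEnd 𝕜) (sv k' j) = if k = k' then (1 : 𝕜) else 0 := by
    intro k k'
    have h1 : (⟪sv k', sv k⟫_𝕜 : 𝕜) = ∑ j, (starRingEnd 𝕜) (sv k' j) * sv k j := by
      simp [PiLp.inner_apply, RCLike.inner_apply]
      exact Finset.sum_congr rfl fun _ _ => mul_comm _ _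
    have h2 : ∑ j, sv k j * (starRingEnd 𝕜) (sv k' j) = (⟪sv k', sv k⟫_𝕜 : 𝕜) := by
      rw [h1]; exact Finset.sum_congr rfl fun j _ => by ring
    rw [h2, hsvON k' k]
    simp [eq_comm]
  have hinner : ∀ j l, (⟪ψ j, ψ l⟫_𝕜 : 𝕜)
      = ((ν : ℝ) : 𝕜) * ((if j = l then 1 else 0) - ((μ : ℝ) : 𝕜) * (⟪φ j, φ l⟫_𝕜 : 𝕜)) := by
    intro j l
    have h1 : (⟪ψ j, ψ l⟫_𝕜 : 𝕜) = ((c₂ ^ 2 : ℝ) : 𝕜) * ∑ k, (starRingEnd 𝕜) (sv k j) * sv k l := by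
      simp only [hψdef, PiLp.inner_apply, RCLike.inner_apply, map_mul, conj_ofReal]
      push_cast [sq]
      rw [Finset.mul_sum]
      refine Finset.sum_congr rfl fun k _ => by ring
    have h2 : ∑ k, (starRingEnd 𝕜) (sv k j) * sv k l
        = (starRingEnd 𝕜) (∑ k, sv k j * (starRingEnd 𝕜) (sv k l)) := by
      rw [map_sum]
      exact Finset.sum_congr rfl fun k _ => by rw [map_mul, RCLike.conj_conj]
    rw [h1, h2, hrow j l, hc₂sq, map_sub, map_mul, conj_ofReal, RCLike.conj_conj]
    congr 1
    by_cases h : j = l <;> simp [h]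
  have hrel : ∀ j l : Fin n, j ≠ l →
      ‖(⟪ψ j, ψ l⟫_𝕜 : 𝕜)‖ = ((m : ℝ) / ((n : ℝ) - m)) * ‖(⟪φ j, φ l⟫_𝕜 : 𝕜)‖ := by
    intro j l hjl
    rw [hinner j l, if_neg hjl, zero_sub, mul_neg, norm_neg, norm_mul, norm_mul,
      RCLike.norm_ofReal, RCLike.norm_ofReal, abs_of_nonneg hνpos.le, abs_of_nonneg hμpos.le,
      ← mul_assoc]
    congr 1
    rw [hν, hμ]
    field_simp
  refine ⟨ψ, ?_, ?_, hrel, ?_⟩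
  · -- unit norm
    intro j
    have h := hinner j j
    rw [if_pos rfl] at h
    have hφ : (⟪φ j, φ j⟫_𝕜 : 𝕜) = 1 := by
      rw [inner_self_eq_norm_sq_to_K, hunit j]
      simp
    rw [hφ, mul_one] at h
    have hval : ν * (1 - μ) = 1 := by
      rw [hν, hμ]
      field_simp
    have h2 : (⟪ψ j, ψ j⟫_𝕜 : 𝕜) = 1 := by
      rw [h, show ((1 : 𝕜) - ((μ:ℝ):𝕜)) = (((1 - μ : ℝ)) : 𝕜) by push_cast; ring,
        ← RCLike.ofReal_mul, hval, RCLike.ofReal_one]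
    have h3 : ((‖ψ j‖ : 𝕜)) ^ 2 = (1 : 𝕜) := by
      rw [← inner_self_eq_norm_sq_to_K, h2]
    have h4 : ‖ψ j‖ ^ 2 = 1 := by exact_mod_cast h3
    nlinarith [norm_nonneg (ψ j)]
  · -- tightness
    intro x
    have hx : ∀ j, (⟪ψ j, x⟫_𝕜 : 𝕜) = (c₂ : 𝕜) * ∑ k, (starRingEnd 𝕜) (sv k j) * x k := by
      intro j
      simp only [hψdef, PiLp.inner_apply, RCLike.inner_apply, map_mul, conj_ofReal,
        Finset.mul_sum]
      exact Finset.sum_congr rfl fun k _ => by ring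
    set W : Fin n → 𝕜 := fun j => ∑ k, (starRingEnd 𝕜) (sv k j) * x k with hWdef
    have hWsum : ((∑ j, ‖W j‖ ^ 2 : ℝ) : 𝕜) = ((‖x‖ ^ 2 : ℝ) : 𝕜) := by
      have hxnorm : ‖x‖ ^ 2 = ∑ k, ‖x k‖ ^ 2 := by
        rw [EuclideanSpace.norm_eq, Real.sq_sqrt (by positivity)]
      rw [hxnorm]
      push_cast
      simp only [← RCLike.conj_mul]
      have hconjW : ∀ j, (starRingEnd 𝕜) (W j) = ∑ k, sv k j * (starRingEnd 𝕜) (x k) := by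
        intro j
        rw [hWdef, map_sum]
        exact Finset.sum_congr rfl fun k _ => by rw [map_mul, RCLike.conj_conj]
      calc ∑ j, (starRingEnd 𝕜) (W j) * W j
          = ∑ j, ∑ k, ∑ k', (sv k j * (starRingEnd 𝕜) (x k))
            * ((starRingEnd 𝕜) (sv k' j) * x k') := by
            refine Finset.sum_congr rfl fun j _ => ?_
            rw [hconjW j, hWdef, Finset.sum_mul_sum]
        _ = ∑ k, ∑ k', ∑ j, (sv k j * (starRingEnd 𝕜) (x k))
            * ((starRingEnd 𝕜) (sv k' j) * x k') := by
            rw [Finset.sum_comm]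
            exact Finset.sum_congr rfl fun k _ => Finset.sum_comm
        _ = ∑ k, ∑ k', ((starRingEnd 𝕜) (x k) * x k')
            * ∑ j, sv k j * (starRingEnd 𝕜) (sv k' j) := by
            refine Finset.sum_congr rfl fun k _ => Finset.sum_congr rfl fun k' _ => ?_
            rw [Finset.mul_sum]
            exact Finset.sum_congr rfl fun j _ => by ring
        _ = ∑ k, (starRingEnd 𝕜) (x k) * x k := by
            simp [hcol, mul_ite, Finset.sum_ite_eq]
    have hWsum' : ∑ j, ‖W j‖ ^ 2 = ‖x‖ ^ 2 := RCLike.ofReal_inj.mp hWsum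
    have hterm : ∀ j, ‖(⟪ψ j, x⟫_𝕜 : 𝕜)‖ ^ 2 = ν * ‖W j‖ ^ 2 := by
      intro j
      rw [hx j, norm_mul, mul_pow, RCLike.norm_ofReal, sq_abs, hc₂sq]
    rw [hcast]
    calc ∑ j, ‖(⟪ψ j, x⟫_𝕜 : 𝕜)‖ ^ 2 = ∑ j, ν * ‖W j‖ ^ 2 :=
          Finset.sum_congr rfl fun j _ => hterm j
      _ = ν * ∑ j, ‖W j‖ ^ 2 := (Finset.mul_sum _ _ _).symm
      _ = ((n : ℝ) / ((n : ℝ) - m)) * ‖x‖ ^ 2 := by rw [hWsum', hν]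
  · -- coherence
    have hset : {t : ℝ | ∃ j l : Fin n, j ≠ l ∧ t = ‖(⟪ψ j, ψ l⟫_𝕜 : 𝕜)‖}
        = ((m : ℝ) / ((n : ℝ) - m)) • {t : ℝ | ∃ j l : Fin n, j ≠ l ∧ t = ‖(⟪φ j, φ l⟫_𝕜 : 𝕜)‖} := by
      ext t
      simp only [Set.mem_smul_set, Set.mem_setOf_eq, smul_eq_mul]
      constructor
      · rintro ⟨j, l, hjl, rfl⟩
        exact ⟨‖(⟪φ j, φ l⟫_𝕜 : 𝕜)‖, ⟨j, l, hjl, rfl⟩, (hrel j l hjl).symm⟩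
      · rintro ⟨t', ⟨j, l, hjl, rfl⟩, rfl⟩
        exact ⟨j, l, hjl, (hrel j l hjl).symm⟩
    unfold coherence
    rw [hset, Real.sSup_smul_of_nonneg (by positivity), smul_eq_mul]
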